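/- For every λ > 0, α > 0, positive integer n, and t > 0, the n-th derivative of t ↦ E_{α,1}(−λ t^α) satisfies (d/dt)^n E_{α,1}(−λ t^α) = −λ t^{α−n} E_{α,α−n+1}(−λ t^α). -/

import Mathlib

open Real Filter Set

lemma div_Gamma_succ (y : ℝ) : y / Real.Gamma (y + 1) = 1 / Real.Gamma y := by
  rcases eq_or_ne y 0 with rfl | hy
  · simp
  · rw [Real.Gamma_add_one hy]
    rcases eq_or_ne (Real.Gamma y) 0 with hg | hg
    · simp [hg]
    · field_simp

lemma rpow_mul_nat {x : ℝ} (hx : 0 ≤ x) (a : ℝ) (k : ℕ) :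
    x ^ (a * (k : ℝ)) = (x ^ a) ^ k := by
  rw [Real.rpow_mul hx, Real.rpow_natCast]

lemma rpow_split {x : ℝ} (hx : 0 < x) (a b : ℝ) (k : ℕ) :
    x ^ (a * (k : ℝ) + b) = (x ^ a) ^ k * x ^ b := by
  rw [Real.rpow_add hx, rpow_mul_nat hx.le]

lemma Gamma_lower (q : ℝ) (hq : 1 ≤ q) {x : ℝ} (hx : 2 ≤ x) :
    Real.exp (-q) * q ^ (x - 2) ≤ Real.Gamma x := by
  have hq0 : 0 < q := lt_of_lt_of_le one_pos hq
  set n : ℕ := ⌊x⌋₊ with hn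
  have hx0 : (0:ℝ) ≤ x := by linarith
  have hn2 : 2 ≤ n := Nat.le_floor (by exact_mod_cast hx)
  have hnx : (n : ℝ) ≤ x := Nat.floor_le hx0
  have hxn : x < (n : ℝ) + 1 := Nat.lt_floor_add_one x
  have h2n : (2:ℝ) ≤ (n:ℝ) := by exact_mod_cast hn2
  have h1 : Real.Gamma n ≤ Real.Gamma x := by
    rcases eq_or_lt_of_le hnx with h | h
    · rw [h]
    · exact le_of_lt (Real.Gamma_strictMonoOn_Ici (mem_Ici.2 h2n)
        (mem_Ici.2 (le_trans h2n hnx)) h)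
  have h2 : Real.Gamma n = (n - 1).factorial := by
    have : ((n - 1 : ℕ) : ℝ) + 1 = (n : ℝ) := by
      have : 1 ≤ n := by omega
      push_cast [Nat.cast_sub this]
      ring
    rw [← this, Real.Gamma_nat_eq_factorial]
  have h3 : Real.exp (-q) * q ^ ((n : ℝ) - 1) ≤ (n - 1).factorial := by
    have h4 : q ^ (n - 1 : ℕ) / (n - 1).factorial ≤ Real.exp q :=
      Real.pow_div_factorial_le_exp q hq0.le _
    have hfpos : (0:ℝ) < (n - 1).factorial := by exact_mod_cast (n-1).factorial_pos
    have h5 : q ^ (n - 1 : ℕ) ≤ Real.exp q * (n - 1).factorial := by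
      rw [div_le_iff₀ hfpos] at h4; linarith
    have h6 : q ^ ((n : ℝ) - 1) = q ^ (n - 1 : ℕ) := by
      rw [← Real.rpow_natCast q (n - 1)]
      congr 1
      have : 1 ≤ n := by omega
      push_cast [Nat.cast_sub this]
      ring
    rw [h6, Real.exp_neg]
    rw [inv_mul_le_iff₀ (Real.exp_pos q)]
    linarith
  calc Real.exp (-q) * q ^ (x - 2)
      ≤ Real.exp (-q) * q ^ ((n : ℝ) - 1) := by
        apply mul_le_mul_of_nonneg_left _ (Real.exp_pos _).le
        exact Real.rpow_le_rpow_of_exponent_le hq (by linarith)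
    _ ≤ (n - 1).factorial := h3
    _ = Real.Gamma n := h2.symm
    _ ≤ Real.Gamma x := h1

lemma summable_aux {α : ℝ} (hα : 0 < α) {ρ c : ℝ} (β : ℝ) (hρ : 0 ≤ ρ) (hc : 0 ≤ c) :
    Summable (fun k : ℕ => ρ ^ k * (α * (k : ℝ) + c) * |1 / Real.Gamma (α * (k : ℝ) + β)|) := by
  set q : ℝ := max 1 ((2 * ρ + 1) ^ (1 / α)) with hqdef
  have hq1 : 1 ≤ q := le_max_left _ _
  have hq0 : 0 < q := lt_of_lt_of_le one_pos hq1
  have hqα : 2 * ρ + 1 ≤ q ^ α := by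
    have h1 : ((2 * ρ + 1) ^ (1 / α)) ^ α ≤ q ^ α :=
      Real.rpow_le_rpow (Real.rpow_nonneg (by linarith) _) (le_max_right _ _) hα.le
    rwa [← Real.rpow_mul (by linarith), one_div, inv_mul_cancel₀ hα.ne', Real.rpow_one] at h1
  have hqαpos : 0 < q ^ α := Real.rpow_pos_of_pos hq0 _
  obtain ⟨N, hN⟩ : ∃ N : ℕ, (2 - β) / α ≤ N := exists_nat_ge _
  set C : ℝ := Real.exp q * q ^ (2 - β) with hC
  have hCpos : 0 < C := mul_pos (Real.exp_pos _) (Real.rpow_pos_of_pos hq0 _)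
  have hs1 : Summable (fun k : ℕ => (k : ℝ) * (2⁻¹ : ℝ) ^ k) := by
    simpa using summable_pow_mul_geometric_of_norm_lt_one (R := ℝ) 1 (r := (2⁻¹ : ℝ)) (by norm_num)
  have hs2 : Summable (fun k : ℕ => (α * (k : ℝ) + c) * (2⁻¹ : ℝ) ^ k) := by
    have h := (hs1.mul_left α).add ((summable_geometric_of_lt_one (r := (2⁻¹:ℝ)) (by norm_num) (by norm_num)).mul_left c)
    refine h.congr fun k => ?_
    ring
  apply (summable_nat_add_iff N).1
  refine Summable.of_nonneg_of_le (fun k => by positivity) (fun k => ?_)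
    ((summable_nat_add_iff N).2 (hs2.mul_left C))
  set m : ℕ := k + N with hm
  have hx2 : 2 ≤ α * (m : ℝ) + β := by
    have h1 : (2 - β) / α ≤ (m : ℝ) := le_trans hN (by exact_mod_cast Nat.cast_le.2 (Nat.le_add_left N k))
    rw [div_le_iff₀ hα] at h1
    linarith
  have hG := Gamma_lower q hq1 hx2
  have hGpos : 0 < Real.Gamma (α * (m : ℝ) + β) :=
    lt_of_lt_of_le (by positivity) hG
  rw [abs_of_pos (by positivity : (0:ℝ) < 1 / Real.Gamma (α * (m : ℝ) + β))]
  have key : ρ ^ m * (1 / Real.Gamma (α * (m : ℝ) + β)) ≤ C * (2⁻¹ : ℝ) ^ m := by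
    have h1 : 1 / Real.Gamma (α * (m : ℝ) + β)
        ≤ 1 / (Real.exp (-q) * q ^ (α * (m : ℝ) + β - 2)) :=
      one_div_le_one_div_of_le (by positivity) hG
    have h2 : ρ ^ m * (1 / (Real.exp (-q) * q ^ (α * (m : ℝ) + β - 2)))
        = C * (ρ / q ^ α) ^ m := by
      have hCval : C = Real.exp q * (q ^ (β - 2))⁻¹ := by
        rw [hC, show (2 - β : ℝ) = -(β - 2) by ring, Real.rpow_neg hq0.le]
      rw [show α * (m : ℝ) + β - 2 = α * (m : ℝ) + (β - 2) by ring,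
        rpow_split hq0, Real.exp_neg, hCval, div_pow]
      have hq2 : (q : ℝ) ^ (β - 2) ≠ 0 := (Real.rpow_pos_of_pos hq0 _).ne'
      have hqm : ((q : ℝ) ^ α) ^ m ≠ 0 := (pow_pos hqαpos m).ne'
      field_simp
    calc ρ ^ m * (1 / Real.Gamma (α * (m : ℝ) + β))
        ≤ ρ ^ m * (1 / (Real.exp (-q) * q ^ (α * (m : ℝ) + β - 2))) :=
          mul_le_mul_of_nonneg_left h1 (pow_nonneg hρ m)
      _ = C * (ρ / q ^ α) ^ m := h2
      _ ≤ C * (2⁻¹ : ℝ) ^ m := by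
          apply mul_le_mul_of_nonneg_left _ hCpos.le
          apply pow_le_pow_left₀ (by positivity)
          rw [div_le_iff₀ hqαpos]
          linarith
  calc ρ ^ m * (α * (m : ℝ) + c) * (1 / Real.Gamma (α * (m : ℝ) + β))
      = (α * (m : ℝ) + c) * (ρ ^ m * (1 / Real.Gamma (α * (m : ℝ) + β))) := by ring
    _ ≤ (α * (m : ℝ) + c) * (C * (2⁻¹ : ℝ) ^ m) :=
        mul_le_mul_of_nonneg_left key (by positivity)
    _ = C * ((α * (m : ℝ) + c) * (2⁻¹ : ℝ) ^ m) := by ring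


/-- The real Mittag-Leffler function `E_{α,β}(x) = ∑_{k=0}^∞ x^k / Γ(αk + β)`,
with the convention `1/Γ(αk+β) = 0` when `αk + β` is a nonpositive integer
(this is how Mathlib's `Real.Gamma` behaves, being `0` at nonpositive integers). -/
noncomputable def mittagLefflerReal (α β : ℝ) (x : ℝ) : ℝ :=
  ∑' k : ℕ, x ^ k / Real.Gamma (α * (k : ℝ) + β)

noncomputable def MLaux (α lam β : ℝ) (τ : ℝ) : ℝ :=
  ∑' k : ℕ, (-lam) ^ k * τ ^ (α * (k : ℝ) + β - 1) / Real.Gamma (α * (k : ℝ) + β)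

lemma norm_MLaux_term {α lam : ℝ} (hα : 0 < α) (hlam : 0 < lam) (β : ℝ) {τ : ℝ} (hτ : 0 < τ)
    (k : ℕ) : ‖(-lam) ^ k * τ ^ (α * (k : ℝ) + β - 1) / Real.Gamma (α * (k : ℝ) + β)‖
      ≤ τ ^ (β - 1) * ((lam * τ ^ α) ^ k * (α * (k : ℝ) + 1) * |1 / Real.Gamma (α * (k : ℝ) + β)|) := by
  have h1 : ‖(-lam) ^ k * τ ^ (α * (k : ℝ) + β - 1) / Real.Gamma (α * (k : ℝ) + β)‖
      = lam ^ k * τ ^ (α * (k : ℝ) + β - 1) * |1 / Real.Gamma (α * (k : ℝ) + β)| := by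
    rw [norm_div, norm_mul, norm_pow, norm_neg, Real.norm_eq_abs, Real.norm_eq_abs,
      abs_of_pos hlam, abs_of_pos (Real.rpow_pos_of_pos hτ _), Real.norm_eq_abs,
      abs_one_div, div_eq_mul_inv, one_div, mul_assoc]
  rw [h1, show α * (k : ℝ) + β - 1 = α * (k : ℝ) + (β - 1) by ring, rpow_split hτ,
    mul_pow lam]
  have h2 : lam ^ k * ((τ ^ α) ^ k * τ ^ (β - 1)) * |1 / Real.Gamma (α * (k : ℝ) + β)|
      = τ ^ (β - 1) * ((lam ^ k * (τ ^ α) ^ k) * 1 * |1 / Real.Gamma (α * (k : ℝ) + β)|) := by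
    ring
  rw [h2]
  apply mul_le_mul_of_nonneg_left _ (Real.rpow_pos_of_pos hτ _).le
  apply mul_le_mul_of_nonneg_right _ (abs_nonneg _)
  apply mul_le_mul_of_nonneg_left _ (by positivity)
  have : (0:ℝ) ≤ α * (k : ℝ) := by positivity
  linarith

lemma summable_MLaux {α lam : ℝ} (hα : 0 < α) (hlam : 0 < lam) (β : ℝ) {τ : ℝ} (hτ : 0 < τ) :
    Summable (fun k : ℕ =>
      (-lam) ^ k * τ ^ (α * (k : ℝ) + β - 1) / Real.Gamma (α * (k : ℝ) + β)) := by
  apply Summable.of_norm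
  refine Summable.of_nonneg_of_le (fun k => norm_nonneg _)
    (fun k => norm_MLaux_term hα hlam β hτ k) ?_
  exact ((summable_aux hα β (by positivity) zero_le_one).mul_left _)

lemma hasDerivAt_MLaux {α lam : ℝ} (hα : 0 < α) (hlam : 0 < lam) (β : ℝ) {t : ℝ} (ht : 0 < t) :
    HasDerivAt (MLaux α lam β) (MLaux α lam (β - 1) t) t := by
  set c : ℝ := |β - 1| + 1 with hc
  have hc0 : (0:ℝ) ≤ c := by positivity
  set a : ℝ := t / 2 with ha
  set b : ℝ := t + 1 with hb
  have ha0 : 0 < a := by simp [ha]; linarith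
  have hb0 : 0 < b := by simp [hb]; linarith
  set u : ℕ → ℝ := fun k => lam ^ k * (α * (k : ℝ) + c) *
      (a ^ (α * (k : ℝ) + (β - 2)) + b ^ (α * (k : ℝ) + (β - 2))) *
      |1 / Real.Gamma (α * (k : ℝ) + β)| with hu
  have hu_summable : Summable u := by
    have h1 := (summable_aux hα (ρ := lam * a ^ α) (c := c) β (by positivity) hc0).mul_left
      (a ^ (β - 2))
    have h2 := (summable_aux hα (ρ := lam * b ^ α) (c := c) β (by positivity) hc0).mul_left
      (b ^ (β - 2))
    refine (h1.add h2).congr fun k => ?_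
    rw [hu]
    simp only []
    rw [rpow_split ha0, rpow_split hb0, mul_pow lam, mul_pow lam]
    ring
  have key : ∀ y ∈ Ioo a b, HasDerivAt
      (fun z : ℝ => ∑' k : ℕ, (-lam) ^ k * z ^ (α * (k : ℝ) + β - 1) /
        Real.Gamma (α * (k : ℝ) + β))
      (∑' k : ℕ, (-lam) ^ k * ((α * (k : ℝ) + β - 1) * y ^ (α * (k : ℝ) + β - 1 - 1)) /
        Real.Gamma (α * (k : ℝ) + β)) y := by
    intro y hy
    refine hasDerivAt_tsum_of_isPreconnected (y₀ := t)
      (g' := fun (k : ℕ) (z : ℝ) => (-lam) ^ k * ((α * (k : ℝ) + β - 1) *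
        z ^ (α * (k : ℝ) + β - 1 - 1)) / Real.Gamma (α * (k : ℝ) + β))
      hu_summable isOpen_Ioo
      (convex_Ioo a b).isPreconnected ?_ ?_ ?_ ?_ hy
    · intro k z hz
      have hz0 : z ≠ 0 := ne_of_gt (lt_trans ha0 hz.1)
      exact ((Real.hasDerivAt_rpow_const (Or.inl hz0)).const_mul ((-lam) ^ k)).div_const _
    · intro k z hz
      have hz0 : 0 < z := lt_trans ha0 hz.1
      have hnorm : ‖(-lam) ^ k * ((α * (k : ℝ) + β - 1) * z ^ (α * (k : ℝ) + β - 1 - 1)) /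
          Real.Gamma (α * (k : ℝ) + β)‖
          = lam ^ k * (|α * (k : ℝ) + β - 1| * z ^ (α * (k : ℝ) + (β - 2))) *
            |1 / Real.Gamma (α * (k : ℝ) + β)| := by
        rw [norm_div, norm_mul, norm_pow, norm_neg, norm_mul, Real.norm_eq_abs,
          Real.norm_eq_abs, Real.norm_eq_abs, Real.norm_eq_abs, abs_of_pos hlam,
          show α * (k : ℝ) + β - 1 - 1 = α * (k : ℝ) + (β - 2) by ring,
          abs_of_pos (Real.rpow_pos_of_pos hz0 _), abs_one_div, div_eq_mul_inv, one_div]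
      rw [hnorm, hu]
      simp only []
      apply mul_le_mul_of_nonneg_right _ (abs_nonneg _)
      have habs : |α * (k : ℝ) + β - 1| ≤ α * (k : ℝ) + c := by
        rw [hc]
        have h1 : |α * (k : ℝ) + β - 1| ≤ |α * (k : ℝ)| + |β - 1| := by
          rw [show α * (k : ℝ) + β - 1 = α * (k : ℝ) + (β - 1) by ring]
          exact abs_add_le _ _
        rw [abs_of_nonneg (by positivity : (0:ℝ) ≤ α * (k : ℝ))] at h1
        linarith
      have hzpow : z ^ (α * (k : ℝ) + (β - 2))
          ≤ a ^ (α * (k : ℝ) + (β - 2)) + b ^ (α * (k : ℝ) + (β - 2)) := by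
        rcases le_or_gt 0 (α * (k : ℝ) + (β - 2)) with he | he
        · have := Real.rpow_le_rpow hz0.le hz.2.le he
          have h0 : 0 ≤ a ^ (α * (k : ℝ) + (β - 2)) := (Real.rpow_pos_of_pos ha0 _).le
          linarith
        · have := Real.rpow_le_rpow_of_nonpos ha0 hz.1.le he.le
          have h0 : 0 ≤ b ^ (α * (k : ℝ) + (β - 2)) := (Real.rpow_pos_of_pos hb0 _).le
          linarith
      calc lam ^ k * (|α * (k : ℝ) + β - 1| * z ^ (α * (k : ℝ) + (β - 2)))
          ≤ lam ^ k * ((α * (k : ℝ) + c) *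
            (a ^ (α * (k : ℝ) + (β - 2)) + b ^ (α * (k : ℝ) + (β - 2)))) := by
            apply mul_le_mul_of_nonneg_left _ (by positivity)
            apply mul_le_mul habs hzpow (Real.rpow_pos_of_pos hz0 _).le
              (le_trans (abs_nonneg _) habs)
        _ = lam ^ k * (α * (k : ℝ) + c) *
            (a ^ (α * (k : ℝ) + (β - 2)) + b ^ (α * (k : ℝ) + (β - 2))) := by ring
    · exact ⟨by rw [ha]; linarith, by rw [hb]; linarith⟩
    · exact summable_MLaux hα hlam β ht
  have hmem : t ∈ Ioo a b := ⟨by rw [ha]; linarith, by rw [hb]; linarith⟩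
  have h := key t hmem
  convert h using 1
  · rfl
  rw [MLaux]
  apply tsum_congr
  intro k
  rw [show α * (k : ℝ) + (β - 1) - 1 = α * (k : ℝ) + β - 1 - 1 by ring,
    show α * (k : ℝ) + (β - 1) = α * (k : ℝ) + β - 1 by ring]
  have hg : (α * (k : ℝ) + β - 1) / Real.Gamma (α * (k : ℝ) + β)
      = 1 / Real.Gamma (α * (k : ℝ) + β - 1) := by
    have h := div_Gamma_succ (α * (k : ℝ) + β - 1)
    rwa [show α * (k : ℝ) + β - 1 + 1 = α * (k : ℝ) + β by ring] at h
  rw [div_eq_mul_inv, div_eq_mul_inv, ← one_div, ← hg]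
  field_simp


lemma mittagLeffler_eq_MLaux {α lam : ℝ} (hα : 0 < α) (hlam : 0 < lam) {τ : ℝ} (hτ : 0 < τ) :
    mittagLefflerReal α 1 (-(lam * τ ^ α)) = MLaux α lam 1 τ := by
  rw [mittagLefflerReal, MLaux]
  apply tsum_congr
  intro k
  rw [show α * (k : ℝ) + 1 - 1 = α * (k : ℝ) by ring, rpow_mul_nat hτ.le,
    show -(lam * τ ^ α) = (-lam) * (τ ^ α) by ring, mul_pow]

/-- For `λ > 0`, `α > 0`, a positive integer `n` and `t > 0`,
`(d/dt)^n E_{α,1}(−λ t^α) = −λ t^{α−n} E_{α,α−n+1}(−λ t^α)`. -/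
theorem iteratedDeriv_mittagLeffler (α lam : ℝ) (hα : 0 < α) (hlam : 0 < lam)
    (n : ℕ) (hn : 1 ≤ n) (t : ℝ) (ht : 0 < t) :
    iteratedDeriv n (fun τ : ℝ => mittagLefflerReal α 1 (-(lam * τ ^ α))) t
      = -lam * t ^ (α - (n : ℝ)) * mittagLefflerReal α (α - (n : ℝ) + 1) (-(lam * t ^ α)) := by
  have key : ∀ m : ℕ, ∀ τ : ℝ, 0 < τ →
      iteratedDeriv m (fun τ : ℝ => mittagLefflerReal α 1 (-(lam * τ ^ α))) τ
        = MLaux α lam (1 - (m : ℝ)) τ := by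
    intro m
    induction m with
    | zero =>
      intro τ hτ
      simp only [iteratedDeriv_zero, Nat.cast_zero, sub_zero]
      exact mittagLeffler_eq_MLaux hα hlam hτ
    | succ m ih =>
      intro τ hτ
      rw [iteratedDeriv_succ]
      have hev : (iteratedDeriv m fun τ : ℝ => mittagLefflerReal α 1 (-(lam * τ ^ α)))
          =ᶠ[nhds τ] MLaux α lam (1 - (m : ℝ)) :=
        eventually_of_mem (isOpen_Ioi.mem_nhds hτ) (fun x hx => ih x hx)
      rw [hev.deriv_eq, (hasDerivAt_MLaux hα hlam (1 - (m : ℝ)) hτ).deriv]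
      congr 1
      push_cast
      ring
  rw [key n t ht]
  have hsum := summable_MLaux hα hlam (1 - (n : ℝ)) ht
  rw [MLaux, Summable.tsum_eq_zero_add hsum]
  have h0 : (-lam) ^ (0 : ℕ) * t ^ (α * ((0 : ℕ) : ℝ) + (1 - (n : ℝ)) - 1) /
      Real.Gamma (α * ((0 : ℕ) : ℝ) + (1 - (n : ℝ))) = 0 := by
    have hΓ : Real.Gamma (α * ((0 : ℕ) : ℝ) + (1 - (n : ℝ))) = 0 := by
      have h1 : α * ((0 : ℕ) : ℝ) + (1 - (n : ℝ)) = -((n - 1 : ℕ) : ℝ) := by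
        push_cast [Nat.cast_sub hn]
        ring
      rw [h1, Real.Gamma_neg_nat_eq_zero]
    rw [hΓ, div_zero]
  rw [h0, zero_add, mittagLefflerReal, ← tsum_mul_left]
  apply tsum_congr
  intro k
  rw [show ((k + 1 : ℕ) : ℝ) = (k : ℝ) + 1 by push_cast; ring,
    show α * ((k : ℝ) + 1) + (1 - (n : ℝ)) = α * (k : ℝ) + (α - (n : ℝ) + 1) by ring,
    show α * (k : ℝ) + (α - (n : ℝ) + 1) - 1 = α * (k : ℝ) + (α - (n : ℝ)) by ring,
    rpow_split ht, pow_succ,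
    show -(lam * t ^ α) = (-lam) * (t ^ α) by ring, mul_pow]
  ring
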